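/- Assume all eight w_{ijk} are nonzero, that F_{··0} = 0 and F_{··1} = 0 (both quadrics are singular), and that F_{0··}, F_{1··}, F_{·0·}, F_{·1·} and H are all nonzero. Then the set S = {(x,y) ∈ ℂ² : f₀(x,y) = 0 and f₁(x,y) = 0} has exactly two elements, and every element (x,y) of S satisfies x ≠ 0 and y ≠ 0. -/

import Mathlib

theorem stmt_11 (w000 w001 w010 w011 w100 w101 w110 w111 : ℂ)
    (h000 : w000 ≠ 0) (h001 : w001 ≠ 0) (h010 : w010 ≠ 0) (h011 : w011 ≠ 0)
    (h100 : w100 ≠ 0) (h101 : w101 ≠ 0) (h110 : w110 ≠ 0) (h111 : w111 ≠ 0)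
    (hFdd0 : w000 * w110 - w010 * w100 = 0)
    (hFdd1 : w001 * w111 - w011 * w101 = 0)
    (hF0d : w000 * w011 - w010 * w001 ≠ 0)
    (hF1d : w100 * w111 - w110 * w101 ≠ 0)
    (hFd0 : w000 * w101 - w100 * w001 ≠ 0)
    (hFd1 : w010 * w111 - w110 * w011 ≠ 0)
    (hH : ((w000 * w111 - w001 * w110) - (w010 * w101 - w011 * w100)) ^ 2
      - 4 * (w000 * w011 - w010 * w001) * (w100 * w111 - w110 * w101) ≠ 0)
    (S : Set (ℂ × ℂ))
    (hS : S = {p : ℂ × ℂ |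
      w000 + w100 * p.1 + w010 * p.2 + w110 * p.1 * p.2 = 0 ∧
      w001 + w101 * p.1 + w011 * p.2 + w111 * p.1 * p.2 = 0}) :
    S.ncard = 2 ∧ ∀ p ∈ S, p.1 ≠ 0 ∧ p.2 ≠ 0 := by
  have key : S = {((-w000/w100 : ℂ), (-w001/w011 : ℂ)),
      ((-w001/w101 : ℂ), (-w000/w010 : ℂ))} := by
    rw [hS]
    ext ⟨x, y⟩
    simp only [Set.mem_setOf_eq, Set.mem_insert_iff, Set.mem_singleton_iff, Prod.mk.injEq]
    constructor
    · rintro ⟨e0, e1⟩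
      have f0 : (w000 + w100 * x) * (w000 + w010 * y) = 0 := by
        linear_combination w000 * e0 - x * y * hFdd0
      have f1 : (w001 + w101 * x) * (w001 + w011 * y) = 0 := by
        linear_combination w001 * e1 - x * y * hFdd1
      rcases mul_eq_zero.mp f0 with hx0 | hy0 <;> rcases mul_eq_zero.mp f1 with hx1 | hy1
      · exact absurd (by linear_combination w101 * hx0 - w100 * hx1) hFd0
      · left
        constructor
        · field_simp
          linear_combination hx0
        · field_simp
          linear_combination hy1
      · right
        constructor
        · field_simp
          linear_combination hx1
        · field_simp
          linear_combination hy0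
      · exact absurd (by linear_combination w011 * hy0 - w010 * hy1) hF0d
    · rintro (⟨hx, hy⟩ | ⟨hx, hy⟩) <;> subst hx <;> subst hy <;> constructor
      · have : w000 + w100 * (-w000/w100) + w010 * (-w001/w011)
            + w110 * (-w000/w100) * (-w001/w011)
            = (w000 * w110 - w010 * w100) * w001 / (w100 * w011) := by
          field_simp; ring
        rw [this, hFdd0]; simp
      · have : w001 + w101 * (-w000/w100) + w011 * (-w001/w011)
            + w111 * (-w000/w100) * (-w001/w011)
            = (w001 * w111 - w011 * w101) * w000 / (w100 * w011) := by
          field_simp; ring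
        rw [this, hFdd1]; simp
      · have : w000 + w100 * (-w001/w101) + w010 * (-w000/w010)
            + w110 * (-w001/w101) * (-w000/w010)
            = (w000 * w110 - w010 * w100) * w001 / (w101 * w010) := by
          field_simp; ring
        rw [this, hFdd0]; simp
      · have : w001 + w101 * (-w001/w101) + w011 * (-w000/w010)
            + w111 * (-w001/w101) * (-w000/w010)
            = (w001 * w111 - w011 * w101) * w000 / (w101 * w010) := by
          field_simp; ring
        rw [this, hFdd1]; simp
  have hne : ((-w000/w100 : ℂ), (-w001/w011 : ℂ)) ≠ ((-w001/w101 : ℂ), (-w000/w010 : ℂ)) := by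
    intro h
    have h1 : (-w000/w100 : ℂ) = -w001/w101 := congrArg Prod.fst h
    apply hFd0
    field_simp at h1
    linear_combination -h1
  constructor
  · rw [key]
    exact Set.ncard_pair hne
  · rw [key]
    rintro p (hp | hp) <;> subst hp <;>
      exact ⟨div_ne_zero (neg_ne_zero.mpr (by assumption)) (by assumption),
        div_ne_zero (neg_ne_zero.mpr (by assumption)) (by assumption)⟩
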